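/- Let A be a commutative Hopf algebra over ℂ, J a Hopf 2-cocycle for A, B ⊆ A a Hopf subalgebra with augmentation ideal B⁺ := B ∩ ker ε, x ∈ A a grouplike element, and y ∈ A an element with Δ(y) − y⊗1 − 1⊗y ∈ B⁺ ⊗ B⁺. Then there exists c ∈ B⁺ such that the commutator of y and x in the twisted Hopf algebra _J A_J satisfies _J m_J(y⊗x) − _J m_J(x⊗y) = x·c (product taken in A). -/

import Mathlib

open TensorProduct LinearMap

noncomputable section

/-- Convolution product of linear forms on a coalgebra `C` over `ℂ`:
`(F * G)(x) = Σ F(x₁) G(x₂)`. -/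
def conv {C : Type} [AddCommGroup C] [Module ℂ C] [Coalgebra ℂ C]
    (F G : C →ₗ[ℂ] ℂ) : C →ₗ[ℂ] ℂ :=
  LinearMap.mul' ℂ ℂ ∘ₗ TensorProduct.map F G ∘ₗ Coalgebra.comul

/-- The left-hand side `Σ J(a₁b₁, c) J(a₂, b₂)` of the Hopf 2-cocycle identity,
as a linear form on `(A ⊗ A) ⊗ A`. -/
def cocycleL {A : Type} [Ring A] [Bialgebra ℂ A] (J : A ⊗[ℂ] A →ₗ[ℂ] ℂ) :
    ((A ⊗[ℂ] A) ⊗[ℂ] A) →ₗ[ℂ] ℂ :=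
  conv (J ∘ₗ TensorProduct.map (LinearMap.mul' ℂ A) LinearMap.id)
    (LinearMap.mul' ℂ ℂ ∘ₗ TensorProduct.map J Coalgebra.counit)

/-- The right-hand side `Σ J(a, b₁c₁) J(b₂, c₂)` of the Hopf 2-cocycle identity,
as a linear form on `(A ⊗ A) ⊗ A`. -/
def cocycleR {A : Type} [Ring A] [Bialgebra ℂ A] (J : A ⊗[ℂ] A →ₗ[ℂ] ℂ) :
    ((A ⊗[ℂ] A) ⊗[ℂ] A) →ₗ[ℂ] ℂ :=
  conv (J ∘ₗ LinearMap.lTensor A (LinearMap.mul' ℂ A) ∘ₗ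
      (TensorProduct.assoc ℂ A A A).toLinearMap)
    (LinearMap.mul' ℂ ℂ ∘ₗ TensorProduct.map Coalgebra.counit J ∘ₗ
      (TensorProduct.assoc ℂ A A A).toLinearMap)

/-- `J` is a Hopf 2-cocycle for `A` with convolution inverse `Jinv`:
`J * Jinv = Jinv * J = ε ⊗ ε`, the 2-cocycle identity
`Σ J(a₁b₁, c)J(a₂, b₂) = Σ J(a, b₁c₁)J(b₂, c₂)` holds, and `J(a,1) = ε(a) = J(1,a)`. -/
def IsHopf2Cocycle {A : Type} [Ring A] [Bialgebra ℂ A]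
    (J Jinv : A ⊗[ℂ] A →ₗ[ℂ] ℂ) : Prop :=
  conv J Jinv = Coalgebra.counit ∧ conv Jinv J = Coalgebra.counit ∧
  cocycleL J = cocycleR J ∧
  ∀ a : A, J (a ⊗ₜ[ℂ] 1) = Coalgebra.counit (R := ℂ) a ∧
    J ((1 : A) ⊗ₜ[ℂ] a) = Coalgebra.counit (R := ℂ) a

/-- The two-sided twisted multiplication
`_K m_J (a ⊗ b) = Σ Kinv(a₁,b₁) a₂b₂ J(a₃,b₃)`, where `Kinv` plays the role of the
convolution inverse of the left cocycle `K`. -/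
def twistMul {A : Type} [Ring A] [Bialgebra ℂ A] (Kinv J : A ⊗[ℂ] A →ₗ[ℂ] ℂ) :
    A ⊗[ℂ] A →ₗ[ℂ] A :=
  (TensorProduct.lid ℂ A).toLinearMap
    ∘ₗ LinearMap.lTensor ℂ (TensorProduct.rid ℂ A).toLinearMap
    ∘ₗ TensorProduct.map Kinv (TensorProduct.map (LinearMap.mul' ℂ A) J)
    ∘ₗ LinearMap.lTensor (A ⊗[ℂ] A) Coalgebra.comul
    ∘ₗ Coalgebra.comul

/-- The one-sided twisted multiplication `_K m (a ⊗ b) = Σ Kinv(a₁,b₁) a₂b₂`. -/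
def mulLeftTwist {A : Type} [Ring A] [Bialgebra ℂ A] (Kinv : A ⊗[ℂ] A →ₗ[ℂ] ℂ) :
    A ⊗[ℂ] A →ₗ[ℂ] A :=
  (TensorProduct.lid ℂ A).toLinearMap
    ∘ₗ TensorProduct.map Kinv (LinearMap.mul' ℂ A) ∘ₗ Coalgebra.comul

/-- The one-sided twisted multiplication `m_J (a ⊗ b) = Σ a₁b₁ J(a₂,b₂)`. -/
def mulRightTwist {A : Type} [Ring A] [Bialgebra ℂ A] (J : A ⊗[ℂ] A →ₗ[ℂ] ℂ) :
    A ⊗[ℂ] A →ₗ[ℂ] A :=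
  (TensorProduct.rid ℂ A).toLinearMap
    ∘ₗ TensorProduct.map (LinearMap.mul' ℂ A) J ∘ₗ Coalgebra.comul

/-- `p` is a primitive element: `Δ(p) = p⊗1 + 1⊗p`. -/
def IsPrimitive {A : Type} [Ring A] [Bialgebra ℂ A] (p : A) : Prop :=
  Coalgebra.comul (R := ℂ) p = p ⊗ₜ[ℂ] (1 : A) + (1 : A) ⊗ₜ[ℂ] p

/-- `x` is a grouplike element: `Δ(x) = x⊗x` and `ε(x) = 1`. -/
def IsGrouplike {A : Type} [Ring A] [Bialgebra ℂ A] (x : A) : Prop :=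
  Coalgebra.comul (R := ℂ) x = x ⊗ₜ[ℂ] x ∧ Coalgebra.counit (R := ℂ) x = 1


set_option maxHeartbeats 1000000
set_option synthInstance.maxHeartbeats 400000

namespace TwistAux
variable {A : Type} [CommRing A] [HopfAlgebra ℂ A]

def rT (x : A) : A →ₗ[ℂ] A ⊗[ℂ] A := (TensorProduct.mk ℂ A A).flip x
def lT (x : A) : A →ₗ[ℂ] A ⊗[ℂ] A := TensorProduct.mk ℂ A A x
@[simp] lemma rT_apply (x a : A) : rT x a = a ⊗ₜ[ℂ] x := rfl
@[simp] lemma lT_apply (x a : A) : lT x a = x ⊗ₜ[ℂ] a := rfl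

lemma comul_tmulAA (a b : A) : Coalgebra.comul (R := ℂ) (a ⊗ₜ[ℂ] b) =
    TensorProduct.tensorTensorTensorComm ℂ A A A A
      (Coalgebra.comul a ⊗ₜ[ℂ] Coalgebra.comul b) := rfl

lemma counit_tmulAA (a b : A) : Coalgebra.counit (R := ℂ) (a ⊗ₜ[ℂ] b) =
    Coalgebra.counit (R := ℂ) a * Coalgebra.counit (R := ℂ) b := by
  rw [TensorProduct.counit_tmul, smul_eq_mul, mul_comm]

def h₁ (J : A ⊗[ℂ] A →ₗ[ℂ] ℂ) (x : A) : A →ₗ[ℂ] A :=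
  (TensorProduct.rid ℂ A).toLinearMap ∘ₗ
    TensorProduct.map LinearMap.id (J ∘ₗ rT x) ∘ₗ Coalgebra.comul
def h₂ (J : A ⊗[ℂ] A →ₗ[ℂ] ℂ) (x : A) : A →ₗ[ℂ] A :=
  (TensorProduct.rid ℂ A).toLinearMap ∘ₗ
    TensorProduct.map LinearMap.id (J ∘ₗ lT x) ∘ₗ Coalgebra.comul

variable (J Jv : A ⊗[ℂ] A →ₗ[ℂ] ℂ) (x : A)

lemma g_tmul_right (hx : Coalgebra.comul (R := ℂ) x = x ⊗ₜ[ℂ] x) (a : A) :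
    mulRightTwist J (a ⊗ₜ[ℂ] x) = x * h₁ J x a := by
  have key : ∀ u : A ⊗[ℂ] A,
      (TensorProduct.rid ℂ A) (TensorProduct.map (LinearMap.mul' ℂ A) J
        (TensorProduct.tensorTensorTensorComm ℂ A A A A (u ⊗ₜ[ℂ] (x ⊗ₜ[ℂ] x)))) =
      x * (TensorProduct.rid ℂ A) (TensorProduct.map LinearMap.id (J ∘ₗ rT x) u) := by
    intro u
    induction u using TensorProduct.induction_on with
    | zero => simp
    | tmul p q => simp [mul_comm, mul_smul_comm, smul_smul]
    | add u v hu hv => simp only [add_tmul, tmul_add, map_add, mul_add, hu, hv]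
  simp only [mulRightTwist, h₁, coe_comp, LinearEquiv.coe_coe, Function.comp_apply,
    comul_tmulAA, hx]
  exact key _

lemma g_tmul_left (hx : Coalgebra.comul (R := ℂ) x = x ⊗ₜ[ℂ] x) (a : A) :
    mulRightTwist J (x ⊗ₜ[ℂ] a) = x * h₂ J x a := by
  have key : ∀ u : A ⊗[ℂ] A,
      (TensorProduct.rid ℂ A) (TensorProduct.map (LinearMap.mul' ℂ A) J
        (TensorProduct.tensorTensorTensorComm ℂ A A A A ((x ⊗ₜ[ℂ] x) ⊗ₜ[ℂ] u))) =
      x * (TensorProduct.rid ℂ A) (TensorProduct.map LinearMap.id (J ∘ₗ lT x) u) := by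
    intro u
    induction u using TensorProduct.induction_on with
    | zero => simp
    | tmul p q => simp [mul_smul_comm, smul_smul]
    | add u v hu hv => simp only [add_tmul, tmul_add, map_add, mul_add, hu, hv]
  simp only [mulRightTwist, h₂, coe_comp, LinearEquiv.coe_coe, Function.comp_apply,
    comul_tmulAA, hx]
  exact key _

lemma counit_h₁ (a : A) : Coalgebra.counit (R := ℂ) (h₁ J x a) = J (a ⊗ₜ[ℂ] x) := by
  have key : ∀ u : A ⊗[ℂ] A,
      Coalgebra.counit (R := ℂ) ((TensorProduct.rid ℂ A)
        (TensorProduct.map LinearMap.id (J ∘ₗ rT x) u)) =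
      J (rT x ((TensorProduct.lid ℂ A) ((Coalgebra.counit (R := ℂ)).rTensor A u))) := by
    intro u
    induction u using TensorProduct.induction_on with
    | zero => simp
    | tmul p q => simp [← smul_tmul', smul_eq_mul, mul_comm]
    | add u v hu hv => simp only [map_add, hu, hv]
  simp only [h₁, coe_comp, LinearEquiv.coe_coe, Function.comp_apply]
  rw [key, Coalgebra.rTensor_counit_comul]
  simp

lemma counit_h₂ (a : A) : Coalgebra.counit (R := ℂ) (h₂ J x a) = J (x ⊗ₜ[ℂ] a) := by
  have key : ∀ u : A ⊗[ℂ] A,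
      Coalgebra.counit (R := ℂ) ((TensorProduct.rid ℂ A)
        (TensorProduct.map LinearMap.id (J ∘ₗ lT x) u)) =
      J (lT x ((TensorProduct.lid ℂ A) ((Coalgebra.counit (R := ℂ)).rTensor A u))) := by
    intro u
    induction u using TensorProduct.induction_on with
    | zero => simp
    | tmul p q => simp [← smul_tmul', smul_eq_mul, mul_comm]
    | add u v hu hv => simp only [map_add, hu, hv]
  simp only [h₂, coe_comp, LinearEquiv.coe_coe, Function.comp_apply]
  rw [key, Coalgebra.rTensor_counit_comul]
  simp

lemma h₁_mem (B : Subalgebra ℂ A) (a : A)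
    (ha : Coalgebra.comul (R := ℂ) a ∈
      LinearMap.range (TensorProduct.map (Subalgebra.toSubmodule B).subtype
        (Subalgebra.toSubmodule B).subtype)) : h₁ J x a ∈ B := by
  obtain ⟨S, hS⟩ := ha
  simp only [h₁, coe_comp, LinearEquiv.coe_coe, Function.comp_apply, ← hS]
  clear hS
  induction S using TensorProduct.induction_on with
  | zero => simpa using B.zero_mem
  | tmul p q => simpa using B.toSubmodule.smul_mem _ p.2
  | add u v hu hv => simpa only [map_add] using B.add_mem hu hv

lemma h₂_mem (B : Subalgebra ℂ A) (a : A)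
    (ha : Coalgebra.comul (R := ℂ) a ∈
      LinearMap.range (TensorProduct.map (Subalgebra.toSubmodule B).subtype
        (Subalgebra.toSubmodule B).subtype)) : h₂ J x a ∈ B := by
  obtain ⟨S, hS⟩ := ha
  simp only [h₂, coe_comp, LinearEquiv.coe_coe, Function.comp_apply, ← hS]
  clear hS
  induction S using TensorProduct.induction_on with
  | zero => simpa using B.zero_mem
  | tmul p q => simpa using B.toSubmodule.smul_mem _ p.2
  | add u v hu hv => simpa only [map_add] using B.add_mem hu hv

lemma twistMul_eq (u : A ⊗[ℂ] A) :
    twistMul Jv J u =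
      (TensorProduct.lid ℂ A) (TensorProduct.map Jv (mulRightTwist J)
        (Coalgebra.comul (R := ℂ) u)) := by
  simp only [twistMul, coe_comp, Function.comp_apply, LinearEquiv.coe_coe]
  generalize Coalgebra.comul (R := ℂ) u = v
  induction v using TensorProduct.induction_on with
  | zero => simp
  | tmul m n => simp [mulRightTwist]
  | add u v hu hv => simp only [map_add, hu, hv]

variable (P : Submodule ℂ A)

/-- `p ⊗ q ↦ J(q ⊗ x) • p` -/
def M1 : P ⊗[ℂ] P →ₗ[ℂ] A :=
  (TensorProduct.rid ℂ A).toLinearMap ∘ₗ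
    TensorProduct.map P.subtype (J ∘ₗ rT x ∘ₗ P.subtype)
/-- `p ⊗ q ↦ J(x ⊗ q) • p` -/
def M2 : P ⊗[ℂ] P →ₗ[ℂ] A :=
  (TensorProduct.rid ℂ A).toLinearMap ∘ₗ
    TensorProduct.map P.subtype (J ∘ₗ lT x ∘ₗ P.subtype)
/-- `p ⊗ q ↦ Jv(p ⊗ x) • h₁ q` -/
def M3 : P ⊗[ℂ] P →ₗ[ℂ] A :=
  (TensorProduct.lid ℂ A).toLinearMap ∘ₗ
    TensorProduct.map (Jv ∘ₗ rT x ∘ₗ P.subtype) (h₁ J x ∘ₗ P.subtype)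
/-- `p ⊗ q ↦ Jv(x ⊗ p) • h₂ q` -/
def M4 : P ⊗[ℂ] P →ₗ[ℂ] A :=
  (TensorProduct.lid ℂ A).toLinearMap ∘ₗ
    TensorProduct.map (Jv ∘ₗ lT x ∘ₗ P.subtype) (h₂ J x ∘ₗ P.subtype)
/-- `p ⊗ q ↦ Jv(p ⊗ x) * J(q ⊗ x)` -/
def W1 : P ⊗[ℂ] P →ₗ[ℂ] ℂ :=
  LinearMap.mul' ℂ ℂ ∘ₗ
    TensorProduct.map (Jv ∘ₗ rT x ∘ₗ P.subtype) (J ∘ₗ rT x ∘ₗ P.subtype)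
/-- `p ⊗ q ↦ Jv(x ⊗ p) * J(x ⊗ q)` -/
def W2 : P ⊗[ℂ] P →ₗ[ℂ] ℂ :=
  LinearMap.mul' ℂ ℂ ∘ₗ
    TensorProduct.map (Jv ∘ₗ lT x ∘ₗ P.subtype) (J ∘ₗ lT x ∘ₗ P.subtype)

@[simp] lemma M1_tmul (p q : P) : M1 J x P (p ⊗ₜ[ℂ] q) = J ((q : A) ⊗ₜ[ℂ] x) • (p : A) := rfl
@[simp] lemma M2_tmul (p q : P) : M2 J x P (p ⊗ₜ[ℂ] q) = J (x ⊗ₜ[ℂ] (q : A)) • (p : A) := rfl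
@[simp] lemma M3_tmul (p q : P) :
    M3 J Jv x P (p ⊗ₜ[ℂ] q) = Jv ((p : A) ⊗ₜ[ℂ] x) • h₁ J x (q : A) := rfl
@[simp] lemma M4_tmul (p q : P) :
    M4 J Jv x P (p ⊗ₜ[ℂ] q) = Jv (x ⊗ₜ[ℂ] (p : A)) • h₂ J x (q : A) := rfl
@[simp] lemma W1_tmul (p q : P) :
    W1 J Jv x P (p ⊗ₜ[ℂ] q) = Jv ((p : A) ⊗ₜ[ℂ] x) * J ((q : A) ⊗ₜ[ℂ] x) := rfl
@[simp] lemma W2_tmul (p q : P) :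
    W2 J Jv x P (p ⊗ₜ[ℂ] q) = Jv (x ⊗ₜ[ℂ] (p : A)) * J (x ⊗ₜ[ℂ] (q : A)) := rfl

end TwistAux

open TwistAux

/-- Let `A` be a commutative Hopf algebra over `ℂ`, `J` a Hopf 2-cocycle with convolution
inverse `Jinv`, `B ⊆ A` a Hopf subalgebra with augmentation ideal `B⁺ = B ∩ ker ε`,
`x ∈ A` grouplike, and `y ∈ A` with `Δ(y) − y⊗1 − 1⊗y ∈ B⁺ ⊗ B⁺`. Then there exists
`c ∈ B⁺` such that `_J m_J(y⊗x) − _J m_J(x⊗y) = x·c` in `A`. -/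
theorem twistMul_commutator_grouplike {A : Type} [CommRing A] [HopfAlgebra ℂ A]
    (J Jinv : A ⊗[ℂ] A →ₗ[ℂ] ℂ) (hJ : IsHopf2Cocycle J Jinv)
    (B : Subalgebra ℂ A)
    (hB : ∀ b ∈ B, Coalgebra.comul (R := ℂ) b ∈
      LinearMap.range (TensorProduct.map (Subalgebra.toSubmodule B).subtype
        (Subalgebra.toSubmodule B).subtype))
    (Bplus : Submodule ℂ A)
    (hBplus : Bplus = Subalgebra.toSubmodule B ⊓
      LinearMap.ker (Coalgebra.counit (R := ℂ) (A := A)))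
    (x y : A) (hx : IsGrouplike x)
    (hy : Coalgebra.comul (R := ℂ) y - y ⊗ₜ[ℂ] (1 : A) - (1 : A) ⊗ₜ[ℂ] y ∈
      LinearMap.range (TensorProduct.map Bplus.subtype Bplus.subtype)) :
    ∃ c ∈ Bplus, twistMul Jinv J (y ⊗ₜ[ℂ] x) - twistMul Jinv J (x ⊗ₜ[ℂ] y) = x * c := by
  obtain ⟨hxc, hxe⟩ := hx
  obtain ⟨T, hT⟩ := hy
  have hΔy : Coalgebra.comul (R := ℂ) y =
      y ⊗ₜ[ℂ] (1 : A) + (1 : A) ⊗ₜ[ℂ] y +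
        TensorProduct.map Bplus.subtype Bplus.subtype T := by
    rw [hT]; abel
  have hJ1x : J ((1 : A) ⊗ₜ[ℂ] x) = 1 := by rw [(hJ.2.2.2 x).2, hxe]
  have hJx1 : J (x ⊗ₜ[ℂ] (1 : A)) = 1 := by rw [(hJ.2.2.2 x).1, hxe]
  have expand1x : ∀ F G : A ⊗[ℂ] A →ₗ[ℂ] ℂ,
      conv F G ((1 : A) ⊗ₜ[ℂ] x) = F ((1 : A) ⊗ₜ[ℂ] x) * G ((1 : A) ⊗ₜ[ℂ] x) := by
    intro F G
    simp only [conv, coe_comp, Function.comp_apply, comul_tmulAA, Bialgebra.comul_one, hxc,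
      Algebra.TensorProduct.one_def, tensorTensorTensorComm_tmul, map_tmul, mul'_apply]
  have expandx1 : ∀ F G : A ⊗[ℂ] A →ₗ[ℂ] ℂ,
      conv F G (x ⊗ₜ[ℂ] (1 : A)) = F (x ⊗ₜ[ℂ] (1 : A)) * G (x ⊗ₜ[ℂ] (1 : A)) := by
    intro F G
    simp only [conv, coe_comp, Function.comp_apply, comul_tmulAA, Bialgebra.comul_one, hxc,
      Algebra.TensorProduct.one_def, tensorTensorTensorComm_tmul, map_tmul, mul'_apply]
  have hJv1x : Jinv ((1 : A) ⊗ₜ[ℂ] x) = 1 := by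
    have h : conv J Jinv ((1 : A) ⊗ₜ[ℂ] x) =
        Coalgebra.counit (R := ℂ) ((1 : A) ⊗ₜ[ℂ] x) := by rw [hJ.1]
    rw [expand1x, hJ1x, one_mul, counit_tmulAA, Bialgebra.counit_one, hxe, one_mul] at h
    exact h
  have hJvx1 : Jinv (x ⊗ₜ[ℂ] (1 : A)) = 1 := by
    have h : conv J Jinv (x ⊗ₜ[ℂ] (1 : A)) =
        Coalgebra.counit (R := ℂ) (x ⊗ₜ[ℂ] (1 : A)) := by rw [hJ.1]
    rw [expandx1, hJx1, one_mul, counit_tmulAA, Bialgebra.counit_one, hxe, one_mul] at h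
    exact h
  -- sublemmas for the `T`-parts
  have S1 : ∀ u : Bplus ⊗[ℂ] Bplus,
      (TensorProduct.lid ℂ A) (TensorProduct.map Jinv (mulRightTwist J)
        (TensorProduct.tensorTensorTensorComm ℂ A A A A
          ((TensorProduct.map Bplus.subtype Bplus.subtype u) ⊗ₜ[ℂ] (x ⊗ₜ[ℂ] x)))) =
      x * M3 J Jinv x Bplus u := by
    intro u
    induction u using TensorProduct.induction_on with
    | zero => simp
    | tmul p q => simp [g_tmul_right J x hxc, mul_smul_comm]
    | add u v hu hv => simp only [map_add, add_tmul, mul_add, hu, hv]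
  have S1' : ∀ u : Bplus ⊗[ℂ] Bplus,
      (TensorProduct.lid ℂ A) (TensorProduct.map Jinv (mulRightTwist J)
        (TensorProduct.tensorTensorTensorComm ℂ A A A A
          ((x ⊗ₜ[ℂ] x) ⊗ₜ[ℂ] (TensorProduct.map Bplus.subtype Bplus.subtype u)))) =
      x * M4 J Jinv x Bplus u := by
    intro u
    induction u using TensorProduct.induction_on with
    | zero => simp
    | tmul p q => simp [g_tmul_left J x hxc, mul_smul_comm]
    | add u v hu hv => simp only [map_add, tmul_add, mul_add, hu, hv]
  have S2 : ∀ u : Bplus ⊗[ℂ] Bplus,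
      (TensorProduct.rid ℂ A) (TensorProduct.map (LinearMap.mul' ℂ A) J
        (TensorProduct.tensorTensorTensorComm ℂ A A A A
          ((TensorProduct.map Bplus.subtype Bplus.subtype u) ⊗ₜ[ℂ] (x ⊗ₜ[ℂ] x)))) =
      x * M1 J x Bplus u := by
    intro u
    induction u using TensorProduct.induction_on with
    | zero => simp
    | tmul p q => simp [mul_smul_comm, mul_comm]
    | add u v hu hv => simp only [map_add, add_tmul, mul_add, hu, hv]
  have S2' : ∀ u : Bplus ⊗[ℂ] Bplus,
      (TensorProduct.rid ℂ A) (TensorProduct.map (LinearMap.mul' ℂ A) J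
        (TensorProduct.tensorTensorTensorComm ℂ A A A A
          ((x ⊗ₜ[ℂ] x) ⊗ₜ[ℂ] (TensorProduct.map Bplus.subtype Bplus.subtype u)))) =
      x * M2 J x Bplus u := by
    intro u
    induction u using TensorProduct.induction_on with
    | zero => simp
    | tmul p q => simp [mul_smul_comm]
    | add u v hu hv => simp only [map_add, tmul_add, mul_add, hu, hv]
  have S3 : ∀ u : Bplus ⊗[ℂ] Bplus,
      LinearMap.mul' ℂ ℂ (TensorProduct.map Jinv J
        (TensorProduct.tensorTensorTensorComm ℂ A A A A
          ((TensorProduct.map Bplus.subtype Bplus.subtype u) ⊗ₜ[ℂ] (x ⊗ₜ[ℂ] x)))) =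
      W1 J Jinv x Bplus u := by
    intro u
    induction u using TensorProduct.induction_on with
    | zero => simp
    | tmul p q => simp
    | add u v hu hv => simp only [map_add, add_tmul, hu, hv]
  have S3' : ∀ u : Bplus ⊗[ℂ] Bplus,
      LinearMap.mul' ℂ ℂ (TensorProduct.map Jinv J
        (TensorProduct.tensorTensorTensorComm ℂ A A A A
          ((x ⊗ₜ[ℂ] x) ⊗ₜ[ℂ] (TensorProduct.map Bplus.subtype Bplus.subtype u)))) =
      W2 J Jinv x Bplus u := by
    intro u
    induction u using TensorProduct.induction_on with
    | zero => simp
    | tmul p q => simp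
    | add u v hu hv => simp only [map_add, tmul_add, hu, hv]
  -- values of the one-sided twisted product
  have g1x : mulRightTwist J ((1 : A) ⊗ₜ[ℂ] x) = x := by
    simp only [mulRightTwist, coe_comp, LinearEquiv.coe_coe, Function.comp_apply, comul_tmulAA,
      Bialgebra.comul_one, hxc, Algebra.TensorProduct.one_def, tensorTensorTensorComm_tmul,
      map_tmul, mul'_apply, rid_tmul, hJ1x, one_smul, one_mul]
  have gx1 : mulRightTwist J (x ⊗ₜ[ℂ] (1 : A)) = x := by
    simp only [mulRightTwist, coe_comp, LinearEquiv.coe_coe, Function.comp_apply, comul_tmulAA,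
      Bialgebra.comul_one, hxc, Algebra.TensorProduct.one_def, tensorTensorTensorComm_tmul,
      map_tmul, mul'_apply, rid_tmul, hJx1, one_smul, mul_one]
  have gyx : mulRightTwist J (y ⊗ₜ[ℂ] x) =
      y * x + J (y ⊗ₜ[ℂ] x) • x + x * M1 J x Bplus T := by
    simp only [mulRightTwist, coe_comp, LinearEquiv.coe_coe, Function.comp_apply, comul_tmulAA,
      hxc, hΔy, add_tmul, map_add, tensorTensorTensorComm_tmul, map_tmul, mul'_apply, rid_tmul,
      S2, hJ1x, one_smul, one_mul]
  have gxy : mulRightTwist J (x ⊗ₜ[ℂ] y) =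
      x * y + J (x ⊗ₜ[ℂ] y) • x + x * M2 J x Bplus T := by
    simp only [mulRightTwist, coe_comp, LinearEquiv.coe_coe, Function.comp_apply, comul_tmulAA,
      hxc, hΔy, tmul_add, map_add, tensorTensorTensorComm_tmul, map_tmul, mul'_apply, rid_tmul,
      S2', hJx1, one_smul, mul_one]
  -- the convolution identities at y⊗x and x⊗y
  have e1 : Jinv (y ⊗ₜ[ℂ] x) + J (y ⊗ₜ[ℂ] x) + W1 J Jinv x Bplus T =
      Coalgebra.counit (R := ℂ) y := by
    have h : conv Jinv J (y ⊗ₜ[ℂ] x) = Coalgebra.counit (R := ℂ) (y ⊗ₜ[ℂ] x) := by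
      rw [hJ.2.1]
    simp only [conv, coe_comp, Function.comp_apply, comul_tmulAA, hxc, hΔy, add_tmul, map_add,
      tensorTensorTensorComm_tmul, map_tmul, mul'_apply, S3, hJ1x, hJv1x, counit_tmulAA, hxe,
      mul_one, one_mul] at h
    linear_combination h
  have e2 : Jinv (x ⊗ₜ[ℂ] y) + J (x ⊗ₜ[ℂ] y) + W2 J Jinv x Bplus T =
      Coalgebra.counit (R := ℂ) y := by
    have h : conv Jinv J (x ⊗ₜ[ℂ] y) = Coalgebra.counit (R := ℂ) (x ⊗ₜ[ℂ] y) := by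
      rw [hJ.2.1]
    simp only [conv, coe_comp, Function.comp_apply, comul_tmulAA, hxc, hΔy, tmul_add, map_add,
      tensorTensorTensorComm_tmul, map_tmul, mul'_apply, S3', hJx1, hJvx1, counit_tmulAA, hxe,
      mul_one, one_mul] at h
    linear_combination h
  set c : A := (Jinv (y ⊗ₜ[ℂ] x) - Jinv (x ⊗ₜ[ℂ] y) + J (y ⊗ₜ[ℂ] x) - J (x ⊗ₜ[ℂ] y)) • (1 : A)
      + M1 J x Bplus T - M2 J x Bplus T + M3 J Jinv x Bplus T - M4 J Jinv x Bplus T with hc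
  refine ⟨c, ?_, ?_⟩
  · have hle : Bplus ≤ Subalgebra.toSubmodule B := by rw [hBplus]; exact inf_le_left
    have hker : Bplus ≤ LinearMap.ker (Coalgebra.counit (R := ℂ) (A := A)) := by
      rw [hBplus]; exact inf_le_right
    have mem1 : ∀ u : Bplus ⊗[ℂ] Bplus, M1 J x Bplus u ∈ B := by
      intro u
      induction u using TensorProduct.induction_on with
      | zero => simpa using B.zero_mem
      | tmul p q => exact B.toSubmodule.smul_mem _ (hle p.2)
      | add u v hu hv => simpa only [map_add] using B.add_mem hu hv
    have mem2 : ∀ u : Bplus ⊗[ℂ] Bplus, M2 J x Bplus u ∈ B := by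
      intro u
      induction u using TensorProduct.induction_on with
      | zero => simpa using B.zero_mem
      | tmul p q => exact B.toSubmodule.smul_mem _ (hle p.2)
      | add u v hu hv => simpa only [map_add] using B.add_mem hu hv
    have mem3 : ∀ u : Bplus ⊗[ℂ] Bplus, M3 J Jinv x Bplus u ∈ B := by
      intro u
      induction u using TensorProduct.induction_on with
      | zero => simpa using B.zero_mem
      | tmul p q =>
        exact B.toSubmodule.smul_mem _ (h₁_mem J x B (q : A) (hB _ (hle q.2)))
      | add u v hu hv => simpa only [map_add] using B.add_mem hu hv
    have mem4 : ∀ u : Bplus ⊗[ℂ] Bplus, M4 J Jinv x Bplus u ∈ B := by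
      intro u
      induction u using TensorProduct.induction_on with
      | zero => simpa using B.zero_mem
      | tmul p q =>
        exact B.toSubmodule.smul_mem _ (h₂_mem J x B (q : A) (hB _ (hle q.2)))
      | add u v hu hv => simpa only [map_add] using B.add_mem hu hv
    have cM1 : ∀ u : Bplus ⊗[ℂ] Bplus,
        Coalgebra.counit (R := ℂ) (M1 J x Bplus u) = 0 := by
      intro u
      induction u using TensorProduct.induction_on with
      | zero => simp
      | tmul p q =>
        have : Coalgebra.counit (R := ℂ) (p : A) = 0 := hker p.2
        simp [this]
      | add u v hu hv => simp only [map_add, hu, hv, add_zero]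
    have cM2 : ∀ u : Bplus ⊗[ℂ] Bplus,
        Coalgebra.counit (R := ℂ) (M2 J x Bplus u) = 0 := by
      intro u
      induction u using TensorProduct.induction_on with
      | zero => simp
      | tmul p q =>
        have : Coalgebra.counit (R := ℂ) (p : A) = 0 := hker p.2
        simp [this]
      | add u v hu hv => simp only [map_add, hu, hv, add_zero]
    have cM3 : ∀ u : Bplus ⊗[ℂ] Bplus,
        Coalgebra.counit (R := ℂ) (M3 J Jinv x Bplus u) = W1 J Jinv x Bplus u := by
      intro u
      induction u using TensorProduct.induction_on with
      | zero => simp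
      | tmul p q => simp [counit_h₁]
      | add u v hu hv => simp only [map_add, hu, hv]
    have cM4 : ∀ u : Bplus ⊗[ℂ] Bplus,
        Coalgebra.counit (R := ℂ) (M4 J Jinv x Bplus u) = W2 J Jinv x Bplus u := by
      intro u
      induction u using TensorProduct.induction_on with
      | zero => simp
      | tmul p q => simp [counit_h₂]
      | add u v hu hv => simp only [map_add, hu, hv]
    have hmemB : c ∈ Subalgebra.toSubmodule B := by
      rw [hc, Subalgebra.mem_toSubmodule]
      exact B.sub_mem (B.add_mem (B.sub_mem (B.add_mem
        (B.smul_mem B.one_mem _) (mem1 T)) (mem2 T)) (mem3 T)) (mem4 T)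
    have hmemK : c ∈ LinearMap.ker (Coalgebra.counit (R := ℂ) (A := A)) := by
      rw [hc, LinearMap.mem_ker]
      simp only [map_add, map_sub, map_smul, Bialgebra.counit_one, smul_eq_mul, mul_one,
        cM1, cM2, cM3, cM4]
      linear_combination e1 - e2
    exact hBplus.symm ▸ Submodule.mem_inf.2 ⟨hmemB, hmemK⟩
  · rw [hc, twistMul_eq, twistMul_eq, comul_tmulAA, comul_tmulAA, hxc, hΔy]
    simp only [add_tmul, tmul_add, map_add, tensorTensorTensorComm_tmul, map_tmul, lid_tmul,
      S1, S1', g1x, gx1, gyx, gxy, hJv1x, hJvx1, one_smul]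
    rw [mul_comm x y]
    simp only [mul_add, mul_sub, mul_smul_comm, mul_one, sub_smul, add_smul]
    abel


end
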